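/- Let $B \subset \mathbb{R}^D$ be a measurable set of finite measure, $J$ a finite index set, $\psi : B \to \mathbb{R}$ and $\varphi_j : B \to \mathbb{R}^d$ measurable. Suppose there are constants $C_0 < \infty$ and $\gamma > 0$ such that for every $\lambda \in \mathbb{R}$ and all measurable functions $f_j : \mathbb{R}^d \to \mathbb{C}$ with $\|f_j\|_\infty \le 1$, $\left|\int_B e^{i\lambda\psi(x)} \prod_{j \in J} f_j(\varphi_j(x))\,dx\right| \le C_0 (1+|\lambda|)^{-\gamma}$. Then there exist $C < \infty$ and $\tau > 0$ such that for all measurable $g_j : \mathbb{R}^d \to \mathbb{R}$ and all $\varepsilon \in (0,1]$, the sublevel set $\mathcal{E} = \{x \in B : |\psi(x) - \sum_{j \in J} g_j(\varphi_j(x))| < \varepsilon\}$ satisfies $|\mathcal{E}| \le C \varepsilon^{\tau}$. -/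

import Mathlib

open MeasureTheory

lemma fejer_eq (T t : ℝ) (hT : 0 < T) (ht : t ≠ 0) :
    ∫ l in (0:ℝ)..T, (1 - l/T) * Real.cos (l * t)
      = (1 - Real.cos (T*t))/(T*t^2) := by
  have key := intervalIntegral.integral_eq_sub_of_hasDerivAt
    (f := fun l => (1 - l/T) * (Real.sin (l*t)/t) - Real.cos (l*t)/(T*t^2))
    (f' := fun l => (1 - l/T) * Real.cos (l * t)) (a := 0) (b := T)
    (fun l _ => by
      have h1 : HasDerivAt (fun l : ℝ => 1 - l/T) (-(1/T)) l :=
        ((hasDerivAt_id l).div_const T).const_sub 1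
      have h2 : HasDerivAt (fun l : ℝ => Real.sin (l*t)) (Real.cos (l*t) * t) l := by
        refine ((Real.hasDerivAt_sin (l*t)).comp l ((hasDerivAt_id l).mul_const t)).congr_deriv ?_; simp
      have h3 : HasDerivAt (fun l : ℝ => Real.cos (l*t)) (-Real.sin (l*t) * t) l := by
        refine ((Real.hasDerivAt_cos (l*t)).comp l ((hasDerivAt_id l).mul_const t)).congr_deriv ?_; simp
      have := (h1.mul (h2.div_const t)).sub (h3.div_const (T*t^2))
      refine this.congr_deriv ?_
      field_simp
      ring)
    (by
      apply Continuous.intervalIntegrable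
      continuity)
  rw [key]
  simp only [div_self hT.ne', sub_self, zero_mul, Real.cos_zero, zero_div, zero_sub,
    mul_zero, Real.sin_zero]
  field_simp
  ring

lemma fejer_nonneg (T t : ℝ) (hT : 0 < T) :
    0 ≤ ∫ l in (0:ℝ)..T, (1 - l/T) * Real.cos (l * t) := by
  rcases eq_or_ne t 0 with rfl | ht
  · apply intervalIntegral.integral_nonneg hT.le
    intro u hu
    simp only [mul_zero, Real.cos_zero, mul_one]
    have := hu.2
    have : u / T ≤ 1 := (div_le_one hT).2 hu.2
    linarith
  · rw [fejer_eq T t hT ht]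
    apply div_nonneg
    · linarith [Real.cos_le_one (T*t)]
    · positivity

lemma fejer_lower (T t : ℝ) (hT : 0 < T) (h : |t| * T ≤ 1) :
    Real.cos 1 * (T/2) ≤ ∫ l in (0:ℝ)..T, (1 - l/T) * Real.cos (l * t) := by
  have base : ∫ l in (0:ℝ)..T, (1 - l/T) * Real.cos 1 = Real.cos 1 * (T/2) := by
    rw [intervalIntegral.integral_mul_const, intervalIntegral.integral_sub
      (_root_.intervalIntegrable_const) ((Continuous.intervalIntegrable (by continuity) 0 T))]
    simp [intervalIntegral.integral_div, integral_id]
    field_simp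
    ring
  rw [← base]
  apply intervalIntegral.integral_mono_on hT.le
  · exact Continuous.intervalIntegrable (by continuity) 0 T
  · exact Continuous.intervalIntegrable (by continuity) 0 T
  · intro l hl
    have hl0 : 0 ≤ l := hl.1
    have hlT : l ≤ T := hl.2
    have h1 : 0 ≤ 1 - l/T := by
      have : l / T ≤ 1 := (div_le_one hT).2 hlT
      linarith
    have habs : |l * t| ≤ 1 := by
      rw [abs_mul, abs_of_nonneg hl0]
      calc l * |t| ≤ T * |t| := by
            apply mul_le_mul_of_nonneg_right hlT (abs_nonneg t)
        _ = |t| * T := mul_comm _ _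
        _ ≤ 1 := h
    have hcos : Real.cos 1 ≤ Real.cos (l * t) := by
      rw [← Real.cos_abs (l*t)]
      apply Real.cos_le_cos_of_nonneg_of_le_pi (abs_nonneg _) (by linarith [Real.pi_gt_three])
      exact habs
    exact mul_le_mul_of_nonneg_left hcos h1

lemma rpow_int_bound (T p : ℝ) (hT : 1 ≤ T) (hp0 : 0 < p) (hp1 : p ≤ 1) :
    ∫ l in (0:ℝ)..T, (1 + l) ^ (p - 1) ≤ (2*T) ^ p / p := by
  have key := intervalIntegral.integral_eq_sub_of_hasDerivAt
    (f := fun l => (1 + l) ^ p / p)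
    (f' := fun l : ℝ => (1 + l) ^ (p - 1)) (a := 0) (b := T)
    (fun l hl => by
      rw [Set.uIcc_of_le (by linarith : (0:ℝ) ≤ T)] at hl
      have hl0 : 0 ≤ l := hl.1
      have h1l : (0:ℝ) < 1 + l := by linarith
      have := ((Real.hasDerivAt_rpow_const (x := 1 + l) (p := p)
        (Or.inl h1l.ne')).comp l ((hasDerivAt_id l).const_add 1)).div_const p
      exact this.congr_deriv (by field_simp))
    (by
      apply ContinuousOn.intervalIntegrable
      apply ContinuousOn.rpow_const (by fun_prop)
      intro l hl
      left
      rw [Set.uIcc_of_le (by linarith : (0:ℝ) ≤ T)] at hl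
      have : 0 ≤ l := hl.1
      positivity)
  rw [key]
  beta_reduce
  rw [show (1:ℝ) + 0 = 1 by ring, Real.one_rpow]
  have h2 : (1 + T) ^ p ≤ (2*T) ^ p :=
    Real.rpow_le_rpow (by linarith) (by linarith) hp0.le
  have : (1 + T) ^ p / p - 1/p ≤ (2*T)^p / p := by
    have : 0 < p := hp0
    have h3 : 0 ≤ 1/p := by positivity
    calc (1 + T) ^ p / p - 1/p ≤ (1 + T) ^ p / p := by linarith
      _ ≤ (2*T)^p / p := by gcongr
  linarith [this]

theorem stmt8 {D d : ℕ} (J : Type*) [Fintype J]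
    (B : Set (Fin D → ℝ)) (hB : MeasurableSet B) (hBfin : volume B < ⊤)
    (ψ : (Fin D → ℝ) → ℝ) (φ : J → (Fin D → ℝ) → (Fin d → ℝ))
    (hψ : Measurable ψ) (hφ : ∀ j, Measurable (φ j))
    (C₀ γ : ℝ) (hγ : 0 < γ)
    (hosc : ∀ lam : ℝ, ∀ f : J → (Fin d → ℝ) → ℂ,
      (∀ j, Measurable (f j)) → (∀ j y, ‖f j y‖ ≤ 1) →
      ‖∫ x in B, Complex.exp (Complex.I * (lam : ℂ) * ((ψ x : ℝ) : ℂ)) *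
          ∏ j, f j (φ j x)‖ ≤ C₀ * (1 + |lam|) ^ (-γ)) :
    ∃ C τ : ℝ, 0 < τ ∧ ∀ g : J → (Fin d → ℝ) → ℝ, (∀ j, Measurable (g j)) →
      ∀ ε : ℝ, 0 < ε → ε ≤ 1 →
      volume {x ∈ B | |ψ x - ∑ j, g j (φ j x)| < ε} ≤ ENNReal.ofReal (C * ε ^ τ) := by
  have hpi : (3:ℝ) < Real.pi := Real.pi_gt_three
  have hcos1 : 0 < Real.cos 1 :=
    Real.cos_pos_of_mem_Ioo ⟨by linarith, by linarith⟩
  have hfin : IsFiniteMeasure (volume.restrict B) :=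
    ⟨by rwa [Measure.restrict_apply_univ]⟩
  have hC₀ : 0 ≤ C₀ := by
    have h := hosc 0 (fun _ _ => 1) (fun _ => measurable_const) (fun _ _ => by norm_num)
    simp only [abs_zero, add_zero, Real.one_rpow, mul_one] at h
    exact le_trans (norm_nonneg _) h
  set τ : ℝ := min γ (1/2) with hτdef
  have hτ0 : 0 < τ := lt_min hγ (by norm_num)
  have hτhalf : τ ≤ 1/2 := min_le_right _ _
  have hτγ : τ ≤ γ := min_le_left _ _
  set p : ℝ := 1 - τ with hpdef
  have hp0 : 0 < p := by simp only [hpdef]; linarith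
  have hp1 : p ≤ 1 := by simp only [hpdef]; linarith
  refine ⟨4 * C₀ / ((1 - τ) * Real.cos 1), τ, hτ0, ?_⟩
  intro g hg ε hε hε1
  set F : (Fin D → ℝ) → ℝ := fun x => ψ x - ∑ j, g j (φ j x) with hFdef
  have hF : Measurable F :=
    hψ.sub (Finset.measurable_sum _ fun j _ => (hg j).comp (hφ j))
  set T : ℝ := ε⁻¹ with hTdef
  have hT0 : 0 < T := by positivity
  have hT1 : 1 ≤ T := by
    rw [hTdef, le_inv_comm₀ one_pos hε]
    simpa using hε1
  have hεT : ε * T = 1 := mul_inv_cancel₀ hε.ne'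
  -- the sublevel set
  set Eset : Set (Fin D → ℝ) := {x ∈ B | |F x| < ε} with hEdef
  have hEsub : Eset ⊆ B := fun x hx => hx.1
  have hE : MeasurableSet Eset :=
    hB.inter (measurableSet_lt hF.abs measurable_const)
  have hEfin : volume Eset < ⊤ := lt_of_le_of_lt (measure_mono hEsub) hBfin
  have hEB : volume.restrict B Eset = volume Eset := by
    rw [Measure.restrict_apply hE, Set.inter_eq_self_of_subset_left hEsub]
  -- Step A : oscillatory decay for the real integrals
  have hA : ∀ l : ℝ, |∫ x in B, Real.cos (l * F x)| ≤ C₀ * (1 + |l|) ^ (-γ) := by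
    intro l
    set f : J → (Fin d → ℝ) → ℂ :=
      fun j y => Complex.exp (((-(l * g j y) : ℝ) : ℂ) * Complex.I) with hfdef
    have hfm : ∀ j, Measurable (f j) := fun j =>
      Complex.measurable_exp.comp
        ((Complex.measurable_ofReal.comp (((hg j).const_mul l).neg)).mul_const Complex.I)
    have hfb : ∀ j y, ‖f j y‖ ≤ 1 := fun j y => by
      rw [hfdef, Complex.norm_exp_ofReal_mul_I]
    have key := hosc l f hfm hfb
    have hint : ∀ x, Complex.exp (Complex.I * (l:ℂ) * ((ψ x : ℝ) : ℂ)) * ∏ j, f j (φ j x)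
        = Complex.exp (((l * F x : ℝ) : ℂ) * Complex.I) := by
      intro x
      have hprod : ∏ j, f j (φ j x)
          = Complex.exp (((-(l * ∑ j, g j (φ j x)) : ℝ) : ℂ) * Complex.I) := by
        rw [hfdef]
        rw [← Complex.exp_sum]
        congr 1
        rw [← Finset.sum_mul]
        congr 1
        push_cast
        simp [Finset.mul_sum]
      rw [hprod, ← Complex.exp_add]
      congr 1
      simp only [hFdef]
      push_cast
      ring
    have hieq : (∫ x in B, Complex.exp (Complex.I * (l:ℂ) * ((ψ x : ℝ) : ℂ)) * ∏ j, f j (φ j x))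
        = ∫ x in B, Complex.exp (((l * F x : ℝ) : ℂ) * Complex.I) :=
      integral_congr_ae (Filter.Eventually.of_forall fun x => hint x)
    rw [hieq] at key
    have hintg : Integrable (fun x => Complex.exp (((l * F x : ℝ) : ℂ) * Complex.I))
        (volume.restrict B) := by
      have hm : Measurable fun x => Complex.exp (((l * F x : ℝ) : ℂ) * Complex.I) :=
        Complex.measurable_exp.comp
          ((Complex.measurable_ofReal.comp (hF.const_mul l)).mul_const Complex.I)
      refine (integrable_const (1:ℝ)).mono' hm.aestronglyMeasurable ?_
      exact Filter.Eventually.of_forall fun x =>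
        le_of_eq (by rw [Complex.norm_exp_ofReal_mul_I])
    have hre : ∫ x in B, Real.cos (l * F x)
        = Complex.re (∫ x in B, Complex.exp (((l * F x : ℝ) : ℂ) * Complex.I)) := by
      rw [show Complex.re (∫ x in B, Complex.exp (((l * F x : ℝ) : ℂ) * Complex.I))
          = Complex.reCLM (∫ x in B, Complex.exp (((l * F x : ℝ) : ℂ) * Complex.I)) from rfl,
        ← ContinuousLinearMap.integral_comp_comm Complex.reCLM hintg]
      refine integral_congr_ae (Filter.Eventually.of_forall fun x => ?_)
      simp only [Complex.reCLM_apply, Complex.exp_ofReal_mul_I_re]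
    rw [hre]
    exact le_trans (Complex.abs_re_le_norm _) key
  -- Fubini setup
  set ν := volume.restrict (Set.Ioc (0:ℝ) T) with hνdef
  have hνfin : IsFiniteMeasure ν := by
    constructor
    rw [hνdef, Measure.restrict_apply_univ]
    exact measure_Ioc_lt_top
  have hum : Measurable (fun z : (Fin D → ℝ) × ℝ => (1 - z.2/T) * Real.cos (z.2 * F z.1)) :=
    ((measurable_const.sub (measurable_snd.div_const T)).mul
      ((measurable_snd.mul (hF.comp measurable_fst)).cos))
  have hu_int : Integrable (fun z : (Fin D → ℝ) × ℝ => (1 - z.2/T) * Real.cos (z.2 * F z.1))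
      ((volume.restrict B).prod ν) := by
    refine (integrable_const (1:ℝ)).mono' hum.aestronglyMeasurable ?_
    rw [hνdef, Measure.prod_restrict]
    filter_upwards [ae_restrict_mem (hB.prod measurableSet_Ioc)] with z hz
    obtain ⟨_, hz2⟩ := hz
    have h1 : 0 < z.2 := hz2.1
    have h2 : z.2 ≤ T := hz2.2
    rw [Real.norm_eq_abs, abs_mul]
    have hb1 : |1 - z.2/T| ≤ 1 := by
      rw [abs_le]
      constructor
      · have : z.2 / T ≤ 1 := (div_le_one hT0).2 h2
        linarith
      · have : 0 ≤ z.2 / T := by positivity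
        linarith
    calc |1 - z.2/T| * |Real.cos (z.2 * F z.1)| ≤ 1 * 1 :=
          mul_le_mul hb1 (Real.abs_cos_le_one _) (abs_nonneg _) zero_le_one
      _ = 1 := one_mul 1
  have hswap := MeasureTheory.integral_integral_swap
    (f := fun (x : Fin D → ℝ) (l : ℝ) => (1 - l/T) * Real.cos (l * F x))
    (μ := volume.restrict B) (ν := ν) hu_int
  -- lower bound for the inner integral
  have hinner_lb : ∀ x, Set.indicator Eset (fun _ => Real.cos 1 * (T/2)) x
      ≤ ∫ l, (1 - l/T) * Real.cos (l * F x) ∂ν := by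
    intro x
    have hIoc : (∫ l, (1 - l/T) * Real.cos (l * F x) ∂ν)
        = ∫ l in (0:ℝ)..T, (1 - l/T) * Real.cos (l * F x) := by
      rw [hνdef, intervalIntegral.integral_of_le hT0.le]
    by_cases hx : x ∈ Eset
    · rw [Set.indicator_of_mem hx, hIoc]
      refine fejer_lower T (F x) hT0 ?_
      have hFx : |F x| < ε := hx.2
      calc |F x| * T ≤ ε * T := by
            apply mul_le_mul_of_nonneg_right hFx.le hT0.le
        _ = 1 := hεT
    · rw [Set.indicator_of_notMem hx, hIoc]
      exact fejer_nonneg T (F x) hT0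
  -- integrability of the marginals
  have hint_inner : Integrable (fun x => ∫ l, (1 - l/T) * Real.cos (l * F x) ∂ν)
      (volume.restrict B) := hu_int.integral_prod_left
  have hind_int : Integrable (Set.indicator Eset (fun _ => Real.cos 1 * (T/2)))
      (volume.restrict B) := (integrable_const _).indicator hE
  -- main chain
  have step1 : Real.cos 1 * (T/2) * (volume Eset).toReal
      ≤ ∫ x, (∫ l, (1 - l/T) * Real.cos (l * F x) ∂ν) ∂(volume.restrict B) := by
    have := integral_mono hind_int hint_inner hinner_lb
    rwa [integral_indicator_const _ hE, measureReal_def, hEB, smul_eq_mul, mul_comm] at this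
  have step2 : (∫ x, (∫ l, (1 - l/T) * Real.cos (l * F x) ∂ν) ∂(volume.restrict B))
      = ∫ l, (1 - l/T) * (∫ x in B, Real.cos (l * F x)) ∂ν := by
    rw [hswap]
    refine integral_congr_ae (Filter.Eventually.of_forall fun l => ?_)
    exact (show (∫ x in B, (1 - l/T) * Real.cos (l * F x))
      = (1 - l/T) * ∫ x in B, Real.cos (l * F x) from integral_const_mul _ _)
  have hrhs_int : IntegrableOn (fun l => C₀ * (1 + l) ^ (p - 1)) (Set.Ioc (0:ℝ) T) := by
    apply MeasureTheory.IntegrableOn.mono_set (t := Set.Icc (0:ℝ) T) ?_ Set.Ioc_subset_Icc_self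
    apply ContinuousOn.integrableOn_compact isCompact_Icc
    apply ContinuousOn.mul continuousOn_const
    apply ContinuousOn.rpow_const (by fun_prop)
    intro l hl
    left
    have : 0 ≤ l := hl.1
    positivity
  have hlhs_int : Integrable (fun l => (1 - l/T) * (∫ x in B, Real.cos (l * F x))) ν := by
    have h := hu_int.integral_prod_right
    refine h.congr (Filter.Eventually.of_forall fun l => ?_)
    exact (show (∫ x in B, (1 - l/T) * Real.cos (l * F x))
      = (1 - l/T) * ∫ x in B, Real.cos (l * F x) from integral_const_mul _ _)
  have step3 : (∫ l, (1 - l/T) * (∫ x in B, Real.cos (l * F x)) ∂ν)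
      ≤ ∫ l, C₀ * (1 + l) ^ (p - 1) ∂ν := by
    refine integral_mono_ae hlhs_int hrhs_int ?_
    rw [hνdef]
    filter_upwards [ae_restrict_mem measurableSet_Ioc] with l hl
    have hl0 : 0 < l := hl.1
    have hlT : l ≤ T := hl.2
    have hb1 : |1 - l/T| ≤ 1 := by
      rw [abs_le]
      constructor
      · have : l / T ≤ 1 := (div_le_one hT0).2 hlT
        linarith
      · have : 0 ≤ l / T := by positivity
        linarith
    calc (1 - l/T) * (∫ x in B, Real.cos (l * F x))
        ≤ |1 - l/T| * |∫ x in B, Real.cos (l * F x)| := by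
          rw [← abs_mul]; exact le_abs_self _
      _ ≤ 1 * (C₀ * (1 + |l|) ^ (-γ)) := mul_le_mul hb1 (hA l) (abs_nonneg _) zero_le_one
      _ = C₀ * (1 + l) ^ (-γ) := by rw [one_mul, abs_of_pos hl0]
      _ ≤ C₀ * (1 + l) ^ (p - 1) := by
          apply mul_le_mul_of_nonneg_left ?_ hC₀
          apply Real.rpow_le_rpow_of_exponent_le (by linarith)
          simp only [hpdef]; linarith
  have step4 : (∫ l, C₀ * (1 + l) ^ (p - 1) ∂ν) ≤ C₀ * ((2*T) ^ p / p) := by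
    rw [hνdef, ← intervalIntegral.integral_of_le hT0.le, intervalIntegral.integral_const_mul]
    exact mul_le_mul_of_nonneg_left (rpow_int_bound T p hT1 hp0 hp1) hC₀
  -- put everything together
  have hchain : Real.cos 1 * (T/2) * (volume Eset).toReal ≤ C₀ * ((2*T) ^ p / p) :=
    le_trans step1 (le_trans (le_of_eq step2) (le_trans step3 step4))
  -- algebra
  have h2Tp : (2*T) ^ p / T ≤ 2 * ε ^ τ := by
    have h1 : (2*T) ^ p = 2 ^ p * T ^ p :=
      Real.mul_rpow (by norm_num) hT0.le
    have h2 : (2:ℝ) ^ p ≤ 2 := by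
      calc (2:ℝ) ^ p ≤ (2:ℝ) ^ (1:ℝ) :=
            Real.rpow_le_rpow_of_exponent_le (by norm_num) hp1
        _ = 2 := Real.rpow_one 2
    have h3 : T ^ p / T = ε ^ τ := by
      rw [show T ^ p / T = T ^ p / T ^ (1:ℝ) by rw [Real.rpow_one],
        ← Real.rpow_sub hT0, show p - 1 = -τ by simp [hpdef],
        hTdef, Real.rpow_neg (inv_nonneg.2 hε.le), Real.inv_rpow hε.le, inv_inv]
    calc (2*T) ^ p / T = 2 ^ p * (T ^ p / T) := by rw [h1]; ring
      _ = 2 ^ p * ε ^ τ := by rw [h3]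
      _ ≤ 2 * ε ^ τ := by
          apply mul_le_mul_of_nonneg_right h2 (Real.rpow_nonneg hε.le τ)
  have hm : (volume Eset).toReal ≤ 4 * C₀ / ((1 - τ) * Real.cos 1) * ε ^ τ := by
    have hc : 0 < Real.cos 1 * (T/2) := by positivity
    rw [← mul_le_mul_iff_right₀ hc]
    calc Real.cos 1 * (T/2) * (volume Eset).toReal ≤ C₀ * ((2*T) ^ p / p) := hchain
      _ = (Real.cos 1 * (T/2)) * ((2*T) ^ p / T) * (2 * C₀ / (p * Real.cos 1)) := by
          field_simp
      _ ≤ (Real.cos 1 * (T/2)) * (2 * ε ^ τ) * (2 * C₀ / (p * Real.cos 1)) := by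
          apply mul_le_mul_of_nonneg_right (mul_le_mul_of_nonneg_left h2Tp hc.le)
          positivity
      _ = Real.cos 1 * (T/2) * (4 * C₀ / ((1 - τ) * Real.cos 1) * ε ^ τ) := by
          rw [hpdef]
          field_simp
          ring
  calc volume Eset = ENNReal.ofReal (volume Eset).toReal := (ENNReal.ofReal_toReal hEfin.ne).symm
    _ ≤ ENNReal.ofReal (4 * C₀ / ((1 - τ) * Real.cos 1) * ε ^ τ) := ENNReal.ofReal_le_ofReal hm
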